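/- arXiv:1004.2468 — 3 statements merged into one kernel-verified Lean document; each statement's English description precedes it below -/
import Mathlib

section
/- Let ρ, σ' be qubit states with Bloch vectors r, s and priors π₀, π₁ summing to 1. If ‖π₀ r − π₁ s‖ < |π₀ − π₁| then the Hermitian matrix π₀ρ − π₁σ' is positive semidefinite (when π₀ > π₁) or negative semidefinite (when π₀ < π₁); in particular its positive part is either 0 or the whole matrix, and the corresponding Helstrom projection is 0 or the identity. -/
open Matrix
open scoped ComplexOrder

/-- The Pauli matrices. -/
noncomputable def pauli : Fin 3 → Matrix (Fin 2) (Fin 2) ℂ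
  | 0 => !![0, 1; 1, 0]
  | 1 => !![0, -Complex.I; Complex.I, 0]
  | 2 => !![1, 0; 0, -1]

/-- `r·σ` for a real vector `r`. -/
noncomputable def dotPauli (r : Fin 3 → ℝ) : Matrix (Fin 2) (Fin 2) ℂ :=
  ∑ i, (r i : ℂ) • pauli i

/-- The qubit state with Bloch vector `r`. -/
noncomputable def qubitState (r : Fin 3 → ℝ) : Matrix (Fin 2) (Fin 2) ℂ :=
  (1/2 : ℂ) • (1 + dotPauli r)

/-- Euclidean norm on `Fin 3 → ℝ`. -/
noncomputable def norm3 (r : Fin 3 → ℝ) : ℝ := Real.sqrt (∑ i, r i ^ 2)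

lemma key (c t0 t1 t2 : ℝ) (hdet : t0^2 + t1^2 + t2^2 < c^2) (hc : |t2| < c) :
    (!![((c + t2 : ℝ) : ℂ), (t0 : ℂ) - t1 * Complex.I;
        (t0 : ℂ) + t1 * Complex.I, ((c - t2 : ℝ) : ℂ)]).PosSemidef := by
  have ha : 0 < c + t2 := by cases abs_lt.mp hc; linarith
  have hd : 0 ≤ c - t2 := by cases abs_lt.mp hc; linarith
  rw [Matrix.posSemidef_iff_dotProduct_mulVec]
  constructor
  · ext i j
    fin_cases i <;> fin_cases j <;>
      simp [Matrix.conjTranspose_apply, Complex.ext_iff]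
  · intro x
    have hx : star x ⬝ᵥ (!![((c + t2 : ℝ) : ℂ), (t0 : ℂ) - t1 * Complex.I;
        (t0 : ℂ) + t1 * Complex.I, ((c - t2 : ℝ) : ℂ)]).mulVec x =
        (starRingEnd ℂ) (x 0) * (((c + t2 : ℝ) : ℂ) * x 0 + ((t0 : ℂ) - t1 * Complex.I) * x 1)
        + (starRingEnd ℂ) (x 1) * ((((t0 : ℂ) + t1 * Complex.I)) * x 0 + ((c - t2 : ℝ) : ℂ) * x 1) := by
      simp [Matrix.mulVec, dotProduct, Fin.sum_univ_two, mul_comm]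
    rw [hx, Complex.le_def]
    obtain ⟨p, q⟩ := x 0
    obtain ⟨u, v⟩ := x 1
    simp only [Complex.zero_re, Complex.zero_im, Complex.add_re, Complex.add_im, Complex.mul_re,
      Complex.mul_im, Complex.sub_re, Complex.sub_im, Complex.ofReal_re, Complex.ofReal_im,
      Complex.I_re, Complex.I_im, Complex.conj_re, Complex.conj_im]
    constructor
    · nlinarith [sq_nonneg ((c+t2)*p + (t0*u + t1*v)), sq_nonneg ((c+t2)*q + (t0*v - t1*u)),
        mul_nonneg (le_of_lt (by nlinarith : (0:ℝ) < (c+t2)*(c-t2) - (t0^2+t1^2))) (add_nonneg (sq_nonneg u) (sq_nonneg v)),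
        sq_nonneg p, sq_nonneg q, sq_nonneg u, sq_nonneg v, ha]
    · ring

lemma halves (c n t0 t1 t2 : ℝ) (hn0 : 0 ≤ n) (hgap : n < c)
    (hs : n ^ 2 = t0 ^ 2 + t1 ^ 2 + t2 ^ 2) :
    (t0/2) ^ 2 + (t1/2) ^ 2 + (t2/2) ^ 2 < (c/2) ^ 2 ∧ |t2/2| < c/2 := by
  constructor
  · nlinarith [mul_pos (sub_pos.mpr hgap) (by linarith : (0:ℝ) < c + n)]
  · rw [abs_lt]
    constructor <;> nlinarith [sq_nonneg t0, sq_nonneg t1,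
      mul_pos (sub_pos.mpr hgap) (by linarith : (0:ℝ) < c + n)]

lemma main_aux (r s : Fin 3 → ℝ) (π0 π1 : ℝ)
    (hgap : norm3 (fun k => π0 * r k - π1 * s k) < π0 - π1) :
    ((π0 : ℂ) • qubitState r - (π1 : ℂ) • qubitState s).PosSemidef := by
  have hn0 : 0 ≤ norm3 (fun k => π0 * r k - π1 * s k) := Real.sqrt_nonneg _
  have hsq : norm3 (fun k => π0 * r k - π1 * s k) ^ 2 =
      (π0 * r 0 - π1 * s 0) ^ 2 + (π0 * r 1 - π1 * s 1) ^ 2 + (π0 * r 2 - π1 * s 2) ^ 2 := by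
    rw [norm3, Real.sq_sqrt (by positivity), Fin.sum_univ_three]
  obtain ⟨hdet, h2⟩ := halves (π0 - π1) _ _ _ _ hn0 hgap hsq
  have hM : (π0 : ℂ) • qubitState r - (π1 : ℂ) • qubitState s =
      !![(((π0 - π1)/2 + (π0 * r 2 - π1 * s 2)/2 : ℝ) : ℂ),
         (((π0 * r 0 - π1 * s 0)/2 : ℝ) : ℂ) - ((π0 * r 1 - π1 * s 1)/2 : ℝ) * Complex.I;
         (((π0 * r 0 - π1 * s 0)/2 : ℝ) : ℂ) + ((π0 * r 1 - π1 * s 1)/2 : ℝ) * Complex.I,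
         (((π0 - π1)/2 - (π0 * r 2 - π1 * s 2)/2 : ℝ) : ℂ)] := by
    ext i j
    fin_cases i <;> fin_cases j <;>
      · simp [qubitState, dotPauli, pauli, Fin.sum_univ_three, Matrix.one_apply]
        push_cast
        ring
  rw [hM]
  exact key _ _ _ _ hdet h2

/-- If `‖π₀r − π₁s‖ < |π₀ − π₁|` then `π₀ρ − π₁σ'` is positive semidefinite
(when `π₀ > π₁`) or negative semidefinite (when `π₀ < π₁`); in particular the
Helstrom projection is `0` or the identity. -/
theorem qubit_trivial_helstrom
    (r s : Fin 3 → ℝ) (hr : norm3 r ≤ 1) (hs : norm3 s ≤ 1)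
    (π0 π1 : ℝ) (h0 : 0 ≤ π0) (h1 : 0 ≤ π1) (hsum : π0 + π1 = 1)
    (hgap : norm3 (fun k => π0 * r k - π1 * s k) < |π0 - π1|)
    (A : Matrix (Fin 2) (Fin 2) ℂ)
    (hAdef : A = (π0 : ℂ) • qubitState r - (π1 : ℂ) • qubitState s) :
    (π1 < π0 → A.PosSemidef) ∧ (π0 < π1 → (-A).PosSemidef) := by
  have hnorm_symm : norm3 (fun k => π1 * s k - π0 * r k)
      = norm3 (fun k => π0 * r k - π1 * s k) := by
    unfold norm3
    congr 1
    apply Finset.sum_congr rfl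
    intro i _
    ring
  constructor
  · intro hlt
    rw [hAdef]
    apply main_aux
    rwa [abs_of_pos (by linarith)] at hgap
  · intro hlt
    have : -A = (π1 : ℂ) • qubitState s - (π0 : ℂ) • qubitState r := by
      rw [hAdef]; abel
    rw [this]
    apply main_aux
    rw [hnorm_symm]
    rwa [abs_of_neg (by linarith), neg_sub] at hgap
end

section
/- Let A be a Hermitian matrix on a finite-dimensional Hilbert space and let A₊ denote its positive part. Then for every operator P with 0 ≤ P ≤ I one has Tr[A P] ≤ Tr[A₊], with equality when P is the spectral projection of A onto its positive eigenvalues. Consequently, for density matrices ρ, σ and priors π₀ + π₁ = 1, every POVM element 0 ≤ P ≤ I satisfies π₀ Tr[ρ(I − P)] + π₁ Tr[σ P] ≥ (1/2)(1 − Tr|π₀ρ − π₁σ|), with equality for the Helstrom projection P* = [π₀ρ − π₁σ]₊. -/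
open Matrix
open scoped ComplexOrder

lemma psd_trace_re_nonneg {n : ℕ} {M : Matrix (Fin n) (Fin n) ℂ}
    (hM : M.PosSemidef) : 0 ≤ M.trace.re := by
  have h : ∀ i, 0 ≤ (M i i).re := by
    intro i
    have h0 : (0:ℂ) ≤ M i i := by
      exact hM.diag_nonneg
    exact (Complex.le_def.mp h0).1
  simp only [Matrix.trace, Matrix.diag, Complex.re_sum]
  exact Finset.sum_nonneg fun i _ => h i

lemma psd_trace_mul_re_nonneg {n : ℕ} {X Y : Matrix (Fin n) (Fin n) ℂ}
    (hX : X.PosSemidef) (hY : Y.PosSemidef) : 0 ≤ (X * Y).trace.re := by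
  obtain ⟨S, hS, hSS⟩ : ∃ S : Matrix (Fin n) (Fin n) ℂ, S.PosSemidef ∧ S * S = Y := by
    open scoped MatrixOrder in
    exact ⟨CFC.sqrt Y, (CFC.sqrt_nonneg Y).posSemidef, CFC.sqrt_mul_sqrt_self Y hY.nonneg⟩
  have h1 : (X * Y).trace = (S * X * S).trace := by
    conv_lhs => rw [← hSS]
    rw [← Matrix.mul_assoc, Matrix.trace_mul_cycle]
  have h2 := hX.conjTranspose_mul_mul_same S
  rw [hS.1] at h2
  rw [h1]
  exact psd_trace_re_nonneg h2

set_option maxHeartbeats 1000000 in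
lemma abs_add_sub_psd {n : ℕ} {A Aabs : Matrix (Fin n) (Fin n) ℂ} (hA : A.IsHermitian)
    (hAabs : Aabs.PosSemidef) (hAabsSq : Aabs * Aabs = A * A) :
    (Aabs + A).PosSemidef ∧ (Aabs - A).PosSemidef := by
  set U : Matrix (Fin n) (Fin n) ℂ := (hA.eigenvectorUnitary : Matrix (Fin n) (Fin n) ℂ) with hUdef
  set d : Fin n → ℝ := hA.eigenvalues with hddef
  have hspec : A = U * diagonal (Complex.ofReal ∘ d) * star U := hA.spectral_theorem
  have hU2 : star U * U = 1 := (Matrix.mem_unitaryGroup_iff').mp (hA.eigenvectorUnitary).2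
  have hmul : ∀ f g : Fin n → ℝ,
      (U * diagonal (Complex.ofReal ∘ f) * star U) * (U * diagonal (Complex.ofReal ∘ g) * star U)
        = U * diagonal (Complex.ofReal ∘ fun i => f i * g i) * star U := by
    intro f g
    have h1 : (U * diagonal (Complex.ofReal ∘ f) * star U) * (U * diagonal (Complex.ofReal ∘ g) * star U)
        = U * (diagonal (Complex.ofReal ∘ f) * (star U * U) * diagonal (Complex.ofReal ∘ g)) * star U := by
      simp only [Matrix.mul_assoc]
    rw [h1, hU2, Matrix.mul_one, Matrix.diagonal_mul_diagonal]
    have h2 : (fun i => (Complex.ofReal ∘ f) i * (Complex.ofReal ∘ g) i : Fin n → ℂ)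
        = (Complex.ofReal ∘ fun i => f i * g i) := by
      ext i; simp
    rw [h2]
  have hpsd : ∀ f : Fin n → ℝ, (∀ i, 0 ≤ f i) →
      (U * diagonal (Complex.ofReal ∘ f) * star U).PosSemidef := by
    intro f hf
    have hd : Matrix.PosSemidef (diagonal (Complex.ofReal ∘ f) : Matrix (Fin n) (Fin n) ℂ) :=
      Matrix.PosSemidef.diagonal (Pi.le_def.mpr fun i => by
        simpa using Complex.zero_le_real.mpr (hf i))
    simpa [Matrix.star_eq_conjTranspose] using hd.mul_mul_conjTranspose_same U
  set B : Matrix (Fin n) (Fin n) ℂ := U * diagonal (Complex.ofReal ∘ fun i => |d i|) * star U with hBdef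
  have hB : B.PosSemidef := hpsd _ (fun i => abs_nonneg _)
  have hBB : B * B = A * A := by
    rw [hBdef, hmul]
    conv_rhs => rw [hspec]
    rw [hmul]
    congr 2
    ext i
    simp [abs_mul_abs_self]
  have hAB : Aabs = B := by
    open scoped MatrixOrder in
    exact (CFC.sq_eq_sq_iff Aabs B hAabs.nonneg hB.nonneg).mp (by rw [pow_two, pow_two, hAabsSq, hBB])
  constructor
  · have h3 : Aabs + A = U * diagonal (Complex.ofReal ∘ fun i => |d i| + d i) * star U := by
      rw [hAB, hBdef]
      conv_lhs => rw [hspec]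
      rw [← Matrix.add_mul, ← Matrix.mul_add]
      congr 2
      ext i j
      by_cases h : i = j <;> simp [Matrix.diagonal_apply, h]
    rw [h3]
    exact hpsd _ (fun i => by linarith [neg_abs_le (d i)])
  · have h3 : Aabs - A = U * diagonal (Complex.ofReal ∘ fun i => |d i| - d i) * star U := by
      rw [hAB, hBdef]
      conv_lhs => rw [hspec]
      rw [← Matrix.sub_mul, ← Matrix.mul_sub]
      congr 2
      ext i j
      by_cases h : i = j <;> simp [Matrix.diagonal_apply, h]
    rw [h3]
    exact hpsd _ (fun i => by simp [sub_nonneg, le_abs_self])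

/-- For a Hermitian matrix `A` with positive part `A₊ = (A + |A|)/2`, every
`0 ≤ P ≤ I` satisfies `Tr[AP] ≤ Tr[A₊]`, with equality for the spectral
projection onto the positive eigenvalues.  Consequently the error probability of
any POVM element is bounded below by the Helstrom risk
`(1/2)(1 − Tr|π₀ρ − π₁σ|)`, with equality for the Helstrom projection. -/
theorem helstrom_bound
    {n : ℕ} (A : Matrix (Fin n) (Fin n) ℂ) (hA : A.IsHermitian)
    (Aabs : Matrix (Fin n) (Fin n) ℂ) (hAabs : Aabs.PosSemidef)
    (hAabsSq : Aabs * Aabs = A * A)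
    (Aplus : Matrix (Fin n) (Fin n) ℂ) (hAplus : Aplus = (1/2 : ℂ) • (A + Aabs)) :
    (∀ P : Matrix (Fin n) (Fin n) ℂ, P.PosSemidef → (1 - P).PosSemidef →
      ((A * P).trace).re ≤ (Aplus.trace).re) ∧
    (∀ Pst : Matrix (Fin n) (Fin n) ℂ, Pst.IsHermitian → Pst * Pst = Pst →
      A * Pst = Pst * A → (A * Pst).PosSemidef → (-(A * (1 - Pst))).PosSemidef →
      ((A * Pst).trace).re = (Aplus.trace).re) ∧
    (∀ (ρ σ : Matrix (Fin n) (Fin n) ℂ), ρ.PosSemidef → ρ.trace = 1 →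
      σ.PosSemidef → σ.trace = 1 → ∀ π0 π1 : ℝ, 0 ≤ π0 → 0 ≤ π1 → π0 + π1 = 1 →
      A = (π0 : ℂ) • ρ - (π1 : ℂ) • σ →
      (∀ P : Matrix (Fin n) (Fin n) ℂ, P.PosSemidef → (1 - P).PosSemidef →
        (1/2) * (1 - (Aabs.trace).re)
          ≤ π0 * ((ρ * (1 - P)).trace).re + π1 * ((σ * P).trace).re) ∧
      (∀ Pst : Matrix (Fin n) (Fin n) ℂ, Pst.IsHermitian → Pst * Pst = Pst →
        A * Pst = Pst * A → (A * Pst).PosSemidef → (-(A * (1 - Pst))).PosSemidef →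
        π0 * ((ρ * (1 - Pst)).trace).re + π1 * ((σ * Pst).trace).re
          = (1/2) * (1 - (Aabs.trace).re))) := by
  obtain ⟨hadd, hsub⟩ := abs_add_sub_psd hA hAabs hAabsSq
  have hAplusRe : (Aplus.trace).re = (1/2) * ((A.trace).re + (Aabs.trace).re) := by
    rw [hAplus, Matrix.trace_smul, Matrix.trace_add]
    have h12 : (1/2:ℂ) = ((1/2:ℝ):ℂ) := by norm_num
    rw [smul_eq_mul, h12, Complex.re_ofReal_mul, Complex.add_re]
  have part1 : ∀ P : Matrix (Fin n) (Fin n) ℂ, P.PosSemidef → (1-P).PosSemidef →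
      ((A*P).trace).re ≤ (Aplus.trace).re := by
    intro P hP hP1
    have h1 : 0 ≤ (((Aabs - A) * P).trace).re := psd_trace_mul_re_nonneg hsub hP
    have h2 : 0 ≤ (((Aabs + A) * (1-P)).trace).re := psd_trace_mul_re_nonneg hadd hP1
    have e1 : (((Aabs - A) * P).trace).re = ((Aabs*P).trace).re - ((A*P).trace).re := by
      rw [Matrix.sub_mul, Matrix.trace_sub, Complex.sub_re]
    have e2 : (((Aabs + A) * (1-P)).trace).re
        = ((Aabs.trace).re + (A.trace).re) - (((Aabs*P).trace).re + ((A*P).trace).re) := by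
      rw [Matrix.add_mul, Matrix.mul_sub, Matrix.mul_sub, Matrix.mul_one, Matrix.mul_one,
        Matrix.trace_add, Matrix.trace_sub, Matrix.trace_sub]
      simp only [Complex.add_re, Complex.sub_re]
      ring
    rw [e1] at h1
    rw [e2] at h2
    rw [hAplusRe]
    linarith
  have part2 : ∀ Pst : Matrix (Fin n) (Fin n) ℂ, Pst.IsHermitian → Pst*Pst = Pst →
      A*Pst = Pst*A → (A*Pst).PosSemidef → (-(A*(1-Pst))).PosSemidef →
      ((A*Pst).trace).re = (Aplus.trace).re := by
    intro Pst hh hidem hcomm hps1 hps2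
    have hBpsd : (A*Pst + A*Pst - A).PosSemidef := by
      have hx := hps1.add hps2
      have he : A*Pst + -(A*(1-Pst)) = A*Pst + A*Pst - A := by
        rw [Matrix.mul_sub, Matrix.mul_one]; abel
      rwa [he] at hx
    have hQQ : (A*Pst) * (A*Pst) = A*A*Pst := by
      calc (A*Pst)*(A*Pst) = A*(Pst*(A*Pst)) := by simp only [Matrix.mul_assoc]
        _ = A*((Pst*A)*Pst) := by simp only [Matrix.mul_assoc]
        _ = A*((A*Pst)*Pst) := by rw [hcomm]
        _ = A*(A*(Pst*Pst)) := by simp only [Matrix.mul_assoc]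
        _ = A*A*Pst := by rw [hidem, Matrix.mul_assoc]
    have hQA : (A*Pst)*A = A*A*Pst := by
      calc (A*Pst)*A = A*(Pst*A) := by rw [Matrix.mul_assoc]
        _ = A*(A*Pst) := by rw [hcomm]
        _ = A*A*Pst := by rw [Matrix.mul_assoc]
    have hAQ : A*(A*Pst) = A*A*Pst := by rw [Matrix.mul_assoc]
    have hBsq : (A*Pst + A*Pst - A) * (A*Pst + A*Pst - A) = A*A := by
      simp only [Matrix.sub_mul, Matrix.add_mul, Matrix.mul_sub, Matrix.mul_add, hQQ, hQA, hAQ]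
      abel
    have hBeq : A*Pst + A*Pst - A = Aabs :=
      by
        open scoped MatrixOrder in
        exact (CFC.sq_eq_sq_iff _ Aabs hBpsd.nonneg hAabs.nonneg).mp (by rw [pow_two, pow_two, hBsq, hAabsSq])
    have hfin : Aplus = A * Pst := by
      rw [hAplus, ← hBeq]
      have hy : A + (A*Pst + A*Pst - A) = (2:ℂ) • (A*Pst) := by
        rw [two_smul]; abel
      rw [hy, smul_smul]
      norm_num
    rw [hfin]
  refine ⟨part1, part2, ?_⟩
  intro ρ σ hρ hρt hσ hσt π0 π1 hπ0 hπ1 hπsum hAeq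
  have hATr : (A.trace).re = π0 - π1 := by
    rw [hAeq, Matrix.trace_sub, Matrix.trace_smul, Matrix.trace_smul, hρt, hσt]
    simp
  have hAPre : ∀ P : Matrix (Fin n) (Fin n) ℂ,
      ((A*P).trace).re = π0 * ((ρ*P).trace).re - π1 * ((σ*P).trace).re := by
    intro P
    rw [hAeq, Matrix.sub_mul, Matrix.smul_mul, Matrix.smul_mul, Matrix.trace_sub,
      Matrix.trace_smul, Matrix.trace_smul, smul_eq_mul, smul_eq_mul, Complex.sub_re,
      Complex.re_ofReal_mul, Complex.re_ofReal_mul]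
  have hρ1P : ∀ P : Matrix (Fin n) (Fin n) ℂ,
      ((ρ*(1-P)).trace).re = 1 - ((ρ*P).trace).re := by
    intro P
    rw [Matrix.mul_sub, Matrix.mul_one, Matrix.trace_sub, hρt, Complex.sub_re]
    simp
  constructor
  · intro P hP hP1
    have key := part1 P hP hP1
    rw [hAPre P, hAplusRe, hATr] at key
    rw [hρ1P P]
    nlinarith [key]
  · intro Pst h1 h2 h3 h4 h5
    have key := part2 Pst h1 h2 h3 h4 h5
    rw [hAPre Pst, hAplusRe, hATr] at key
    rw [hρ1P Pst]
    nlinarith [key]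
end

section
/- Let d₀ ∈ ℝ³ be nonzero, let z, ẑ ∈ ℝ³ with ẑ ⊥ d₀, and for n ≥ 1 define p = (d₀ + z/√n)/‖d₀ + z/√n‖ and p̂ = (d₀/‖d₀‖ + ẑ/(√n‖d₀‖))/‖d₀/‖d₀‖ + ẑ/(√n‖d₀‖)‖. Then n · (1/2) d · (p − p̂) → ‖z⊥ − ẑ‖²/(4‖d₀‖) as n → ∞, where d = d₀ + z/√n and z⊥ = z − d₀(d₀·z)/‖d₀‖² is the component of z orthogonal to d₀. -/
open Filter
open scoped RealInnerProductSpace Topology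

lemma ptwise (d0 z zh : EuclideanSpace ℝ (Fin 3)) (hd0 : d0 ≠ 0) (hzh : ⟪d0, zh⟫ = 0)
    (ν s : ℝ) (hνs : ν * s ^ 2 = 1)
    (ha : 0 < ‖d0 + s • z‖) (hb : 0 < ‖d0 + s • zh‖)
    (habc : 0 < ‖d0 + s • z‖ * ‖d0 + s • zh‖ + ⟪d0 + s • z, d0 + s • zh⟫) :
    ν * (1/2) *
      ⟪d0 + s • z,
        ‖d0 + s • z‖⁻¹ • (d0 + s • z)
        - ‖‖d0‖⁻¹ • d0 + (s * ‖d0‖⁻¹) • zh‖⁻¹ • (‖d0‖⁻¹ • d0 + (s * ‖d0‖⁻¹) • zh)⟫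
    = (‖d0‖^2 * ‖(z - (⟪d0, z⟫ / ‖d0‖^2) • d0) - zh‖^2
        + 2*s*⟪d0,z⟫*(‖zh‖^2 - ⟪z,zh⟫) + s^2*(‖z‖^2*‖zh‖^2 - ⟪z,zh⟫^2))
      / (2 * ‖d0 + s • zh‖ * (‖d0 + s • z‖ * ‖d0 + s • zh‖ + ⟪d0 + s • z, d0 + s • zh⟫)) := by
  have hd0n : ‖d0‖ ≠ 0 := norm_ne_zero_iff.mpr hd0
  have hrw : ‖d0‖⁻¹ • d0 + (s * ‖d0‖⁻¹) • zh = ‖d0‖⁻¹ • (d0 + s • zh) := by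
    rw [smul_add, smul_smul, mul_comm]
  have hn2 : ‖‖d0‖⁻¹ • (d0 + s • zh)‖ = ‖d0‖⁻¹ * ‖d0 + s • zh‖ := by
    rw [norm_smul, Real.norm_eq_abs, abs_of_nonneg (inv_nonneg.mpr (norm_nonneg _))]
  have hphat : ‖‖d0‖⁻¹ • d0 + (s * ‖d0‖⁻¹) • zh‖⁻¹ • (‖d0‖⁻¹ • d0 + (s * ‖d0‖⁻¹) • zh)
      = ‖d0 + s • zh‖⁻¹ • (d0 + s • zh) := by
    rw [hrw, hn2, mul_inv, inv_inv, smul_smul]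
    congr 1
    field_simp
  rw [hphat]
  set a := ‖d0 + s • z‖ with hadef
  set b := ‖d0 + s • zh‖ with hbdef
  set c := ⟪d0 + s • z, d0 + s • zh⟫ with hcdef
  have ha2 : a ^ 2 = ‖d0‖^2 + 2*s*⟪d0,z⟫ + s^2*‖z‖^2 := by
    rw [hadef, norm_add_sq_real, real_inner_smul_right, norm_smul, mul_pow, Real.norm_eq_abs,
      sq_abs]
    ring
  have hb2 : b ^ 2 = ‖d0‖^2 + s^2*‖zh‖^2 := by
    rw [hbdef, norm_add_sq_real, real_inner_smul_right, hzh, norm_smul, mul_pow,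
      Real.norm_eq_abs, sq_abs]
    ring
  have hc : c = ‖d0‖^2 + s*⟪d0,z⟫ + s^2*⟪z,zh⟫ := by
    rw [hcdef]
    simp only [inner_add_left, inner_add_right, real_inner_smul_left, real_inner_smul_right,
      real_inner_self_eq_norm_sq, hzh, real_inner_comm z d0]
    ring
  have hK : ‖d0‖^2 * ‖(z - (⟪d0,z⟫/‖d0‖^2) • d0) - zh‖^2
      = ‖d0‖^2*‖z‖^2 + ‖d0‖^2*‖zh‖^2 - ⟪d0,z⟫^2 - 2*‖d0‖^2*⟪z,zh⟫ := by
    simp only [norm_sub_sq_real, inner_sub_left, inner_sub_right, real_inner_smul_left,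
      real_inner_smul_right, hzh, real_inner_comm z d0, norm_smul, Real.norm_eq_abs,
      mul_pow, sq_abs]
    field_simp
    ring
  have hane : a ≠ 0 := ha.ne'
  have hbne : b ≠ 0 := hb.ne'
  have hdenne : 2 * b * (a * b + c) ≠ 0 := by positivity
  have hident : a^2*b^2 - c^2
      = s^2 * (‖d0‖^2 * ‖(z - (⟪d0, z⟫ / ‖d0‖^2) • d0) - zh‖^2
        + 2*s*⟪d0,z⟫*(‖zh‖^2 - ⟪z,zh⟫) + s^2*(‖z‖^2*‖zh‖^2 - ⟪z,zh⟫^2)) := by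
    rw [ha2, hb2, hc]
    linear_combination (-(s^2)) * hK
  have hbinv : b * b⁻¹ = 1 := mul_inv_cancel₀ hbne
  rw [inner_sub_right, real_inner_smul_right, real_inner_smul_right,
    real_inner_self_eq_norm_sq, ← hcdef, eq_div_iff hdenne]
  have e1 : a⁻¹ * a ^ 2 = a := by
    rw [sq, inv_mul_cancel_left₀ hane]
  rw [e1]
  clear_value a b c
  linear_combination ν * hident
    + (‖d0‖^2 * ‖(z - (⟪d0, z⟫ / ‖d0‖^2) • d0) - zh‖^2
        + 2*s*⟪d0,z⟫*(‖zh‖^2 - ⟪z,zh⟫) + s^2*(‖z‖^2*‖zh‖^2 - ⟪z,zh⟫^2)) * hνs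
    - ν * c * (a*b + c) * hbinv

/-- The asymptotic expansion of the excess-risk term:
`n · (1/2) d·(p − p̂) → ‖z⊥ − ẑ‖²/(4‖d₀‖)` where
`p = (d₀ + z/√n)/‖d₀ + z/√n‖` and
`p̂ = (d₀/‖d₀‖ + ẑ/(√n‖d₀‖))/‖d₀/‖d₀‖ + ẑ/(√n‖d₀‖)‖`, for `ẑ ⊥ d₀`. -/
theorem excess_risk_quadratic_limit
    (d0 z zh : EuclideanSpace ℝ (Fin 3)) (hd0 : d0 ≠ 0) (hzh : ⟪d0, zh⟫ = 0) :
    Tendsto (fun n : ℕ =>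
      (n : ℝ) * (1/2) *
        ⟪d0 + (Real.sqrt n)⁻¹ • z,
          ‖d0 + (Real.sqrt n)⁻¹ • z‖⁻¹ • (d0 + (Real.sqrt n)⁻¹ • z)
          - ‖‖d0‖⁻¹ • d0 + (Real.sqrt n * ‖d0‖)⁻¹ • zh‖⁻¹ •
              (‖d0‖⁻¹ • d0 + (Real.sqrt n * ‖d0‖)⁻¹ • zh)⟫)
      atTop
      (𝓝 (‖(z - (⟪d0, z⟫ / ‖d0‖^2) • d0) - zh‖^2 / (4 * ‖d0‖))) := by
  have hd0n : ‖d0‖ ≠ 0 := norm_ne_zero_iff.mpr hd0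
  have hd0p : (0:ℝ) < ‖d0‖ := norm_pos_iff.mpr hd0
  have ht : Tendsto (fun n : ℕ => (Real.sqrt n)⁻¹) atTop (𝓝 0) := by
    have h : Tendsto (fun n : ℕ => ((n:ℝ))⁻¹) atTop (𝓝 0) :=
      tendsto_inv_atTop_zero.comp tendsto_natCast_atTop_atTop
    have := (Real.continuous_sqrt.tendsto 0).comp h
    simpa [Function.comp_def, Real.sqrt_inv] using this
  have hca : Continuous (fun s : ℝ => ‖d0 + s • z‖) :=
    (continuous_const.add (continuous_id.smul continuous_const)).norm
  have hcb : Continuous (fun s : ℝ => ‖d0 + s • zh‖) :=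
    (continuous_const.add (continuous_id.smul continuous_const)).norm
  have hcc : Continuous (fun s : ℝ => (⟪d0 + s • z, d0 + s • zh⟫ : ℝ)) :=
    (continuous_const.add (continuous_id.smul continuous_const)).inner
      (continuous_const.add (continuous_id.smul continuous_const))
  have hA : Tendsto (fun n : ℕ => ‖d0 + (Real.sqrt n)⁻¹ • z‖) atTop (𝓝 ‖d0‖) := by
    have := (hca.tendsto 0).comp ht
    simpa [Function.comp_def] using this
  have hB : Tendsto (fun n : ℕ => ‖d0 + (Real.sqrt n)⁻¹ • zh‖) atTop (𝓝 ‖d0‖) := by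
    have := (hcb.tendsto 0).comp ht
    simpa [Function.comp_def] using this
  have hC : Tendsto (fun n : ℕ => (⟪d0 + (Real.sqrt n)⁻¹ • z, d0 + (Real.sqrt n)⁻¹ • zh⟫ : ℝ))
      atTop (𝓝 (‖d0‖^2)) := by
    have h0 : (⟪d0 + (0:ℝ) • z, d0 + (0:ℝ) • zh⟫ : ℝ) = ‖d0‖^2 := by
      rw [zero_smul, add_zero, zero_smul, add_zero, real_inner_self_eq_norm_sq]
    rw [← h0]
    exact (hcc.tendsto 0).comp ht
  have hcnum : Continuous (fun s : ℝ =>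
      ‖d0‖^2 * ‖(z - (⟪d0, z⟫ / ‖d0‖^2) • d0) - zh‖^2
        + 2*s*⟪d0,z⟫*(‖zh‖^2 - ⟪z,zh⟫) + s^2*(‖z‖^2*‖zh‖^2 - ⟪z,zh⟫^2)) := by
    continuity
  have hNUM : Tendsto (fun n : ℕ =>
      ‖d0‖^2 * ‖(z - (⟪d0, z⟫ / ‖d0‖^2) • d0) - zh‖^2
        + 2*(Real.sqrt n)⁻¹*⟪d0,z⟫*(‖zh‖^2 - ⟪z,zh⟫)
        + ((Real.sqrt n)⁻¹)^2*(‖z‖^2*‖zh‖^2 - ⟪z,zh⟫^2)) atTop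
      (𝓝 (‖d0‖^2 * ‖(z - (⟪d0, z⟫ / ‖d0‖^2) • d0) - zh‖^2)) := by
    have h0 : ‖d0‖^2 * ‖(z - (⟪d0, z⟫ / ‖d0‖^2) • d0) - zh‖^2
        + 2*(0:ℝ)*⟪d0,z⟫*(‖zh‖^2 - ⟪z,zh⟫) + (0:ℝ)^2*(‖z‖^2*‖zh‖^2 - ⟪z,zh⟫^2)
        = ‖d0‖^2 * ‖(z - (⟪d0, z⟫ / ‖d0‖^2) • d0) - zh‖^2 := by ring
    have h1 := (hcnum.tendsto 0).comp ht
    rw [h0] at h1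
    exact h1
  have hDEN : Tendsto (fun n : ℕ =>
      2 * ‖d0 + (Real.sqrt n)⁻¹ • zh‖ *
        (‖d0 + (Real.sqrt n)⁻¹ • z‖ * ‖d0 + (Real.sqrt n)⁻¹ • zh‖
          + ⟪d0 + (Real.sqrt n)⁻¹ • z, d0 + (Real.sqrt n)⁻¹ • zh⟫)) atTop
      (𝓝 (2 * ‖d0‖ * (‖d0‖ * ‖d0‖ + ‖d0‖^2))) :=
    (tendsto_const_nhds.mul hB).mul ((hA.mul hB).add hC)
  have hdenlim : (0:ℝ) < 2 * ‖d0‖ * (‖d0‖ * ‖d0‖ + ‖d0‖^2) := by positivity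
  have hlim := hNUM.div hDEN hdenlim.ne'
  have hval : ‖d0‖^2 * ‖(z - (⟪d0, z⟫ / ‖d0‖^2) • d0) - zh‖^2
      / (2 * ‖d0‖ * (‖d0‖ * ‖d0‖ + ‖d0‖^2))
      = ‖(z - (⟪d0, z⟫ / ‖d0‖^2) • d0) - zh‖^2 / (4 * ‖d0‖) := by
    field_simp
    ring
  rw [← hval]
  refine Tendsto.congr' ?_ hlim
  have habc : Tendsto (fun n : ℕ =>
      ‖d0 + (Real.sqrt n)⁻¹ • z‖ * ‖d0 + (Real.sqrt n)⁻¹ • zh‖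
        + ⟪d0 + (Real.sqrt n)⁻¹ • z, d0 + (Real.sqrt n)⁻¹ • zh⟫) atTop
      (𝓝 (‖d0‖ * ‖d0‖ + ‖d0‖^2)) := (hA.mul hB).add hC
  have habcpos : (0:ℝ) < ‖d0‖ * ‖d0‖ + ‖d0‖^2 := by positivity
  filter_upwards [eventually_ge_atTop 1, hA.eventually (eventually_gt_nhds hd0p),
    hB.eventually (eventually_gt_nhds hd0p), habc.eventually (eventually_gt_nhds habcpos)]
    with n hn h1 h2 h3
  have hn0 : ((n:ℝ)) ≠ 0 := Nat.cast_ne_zero.mpr (by omega)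
  have hs2 : (n:ℝ) * ((Real.sqrt n)⁻¹) ^ 2 = 1 := by
    rw [inv_pow, Real.sq_sqrt (Nat.cast_nonneg n), mul_inv_cancel₀ hn0]
  have hpt := ptwise d0 z zh hd0 hzh (n:ℝ) ((Real.sqrt n)⁻¹) hs2 h1 h2 h3
  rw [show ((Real.sqrt n * ‖d0‖)⁻¹ : ℝ) = (Real.sqrt n)⁻¹ * ‖d0‖⁻¹ from mul_inv _ _]
  exact hpt.symm
end
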